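/- arXiv:0711.1486 — 2 statements merged into one kernel-verified Lean document; each statement's English description precedes it below -/
import Mathlib

section
/- Let D ≥ 1, θ > 0, and let {(c_α, w_α) : α = 0,…,b} be a lattice velocity model in ℝ^D. If the model satisfies the isotropy condition of order m for every m ∈ ℕ, then for every n ∈ ℕ and all u, v ∈ ℝ^D the discrete directional moment equals the continuum directional moment: M̃^{(n)}_v(u) = M^{(n)}_v(u). (Theorem 1, directional/contracted form.) -/
open MeasureTheory Real Finset Filter
open scoped RealInnerProductSpace

/-- The directional continuum moment of order `n` in direction `v` of the
Maxwell–Boltzmann equilibrium distribution with unit density, fluid velocity `u`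
and temperature `θ` in dimension `D`:
`M^{(n)}_v(u) = ∫ (c·v)^n (2πθ)^{-D/2} exp(-‖c-u‖²/(2θ)) dc`. -/
noncomputable def contMoment (D : ℕ) (θ : ℝ) (u v : EuclideanSpace ℝ (Fin D)) (n : ℕ) : ℝ :=
  ∫ c : EuclideanSpace ℝ (Fin D),
    (inner ℝ c v : ℝ) ^ n *
      ((2 * π * θ) ^ (-(D : ℝ) / 2) * Real.exp (-‖c - u‖ ^ 2 / (2 * θ)))

/-- The discrete equilibrium distribution of a lattice velocity model
`{(c_α, w_α)}`: `f^eq_α(u) = w_α exp(c_α·u/θ) exp(-‖u‖²/(2θ))`. -/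
noncomputable def discEquil {D b : ℕ} (θ : ℝ) (c : Fin (b + 1) → EuclideanSpace ℝ (Fin D))
    (w : Fin (b + 1) → ℝ) (u : EuclideanSpace ℝ (Fin D)) (α : Fin (b + 1)) : ℝ :=
  w α * Real.exp ((inner ℝ (c α) u : ℝ) / θ) * Real.exp (-‖u‖ ^ 2 / (2 * θ))

/-- The discrete directional moment of order `n` in direction `v`:
`M̃^{(n)}_v(u) = ∑_α (c_α·v)^n f^eq_α(u)`. -/
noncomputable def discMoment {D b : ℕ} (θ : ℝ) (c : Fin (b + 1) → EuclideanSpace ℝ (Fin D))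
    (w : Fin (b + 1) → ℝ) (u v : EuclideanSpace ℝ (Fin D)) (n : ℕ) : ℝ :=
  ∑ α : Fin (b + 1), (inner ℝ (c α) v : ℝ) ^ n * discEquil θ c w u α

/-- The isotropy condition of order `m` for a lattice velocity model (the
contraction with `v^{⊗m}` of `E^{(m)} = θ^{m/2} Δ^{(m)}` for even `m` and
`E^{(m)} = 0` for odd `m`): for all `v`,
`∑_α w_α (c_α·v)^m = (m-1)!! θ^{m/2} ‖v‖^m` if `m` is even, and `= 0` if `m` is odd. -/
def Isotropy {D b : ℕ} (θ : ℝ) (c : Fin (b + 1) → EuclideanSpace ℝ (Fin D))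
    (w : Fin (b + 1) → ℝ) (m : ℕ) : Prop :=
  ∀ v : EuclideanSpace ℝ (Fin D),
    ∑ α : Fin (b + 1), w α * (inner ℝ (c α) v : ℝ) ^ m =
      if Even m then (Nat.doubleFactorial (m - 1) : ℝ) * θ ^ (m / 2) * ‖v‖ ^ m else 0

lemma pow_le_factorial_mul_exp (m : ℕ) (t : ℝ) (ht : 0 ≤ t) : t ^ m ≤ (Nat.factorial m : ℝ) * rexp t := by
  have h := Real.pow_div_factorial_le_exp t ht m
  have hm : (0:ℝ) < Nat.factorial m := by positivity
  rw [div_le_iff₀ hm] at h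
  linarith [h]

lemma amgm_quarter {θ : ℝ} (hθ : 0 < θ) (c t : ℝ) : c * |t| ≤ t ^ 2 / (4 * θ) + θ * c ^ 2 := by
  have h4 : (0:ℝ) < 4 * θ := by positivity
  have h5 : c * |t| ≤ (t ^ 2 + 4 * θ ^ 2 * c ^ 2) / (4 * θ) := by
    rw [le_div_iff₀ h4]
    nlinarith [sq_nonneg (|t| - 2 * θ * c), sq_abs t]
  have h6 : (t ^ 2 + 4 * θ ^ 2 * c ^ 2) / (4 * θ) = t ^ 2 / (4 * θ) + θ * c ^ 2 := by
    field_simp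
  linarith

lemma master1d {θ : ℝ} (hθ : 0 < θ) (m : ℕ) (a : ℝ) :
    ∀ t : ℝ, |t| ^ m * rexp (a * |t|) * rexp (-t ^ 2 / (2 * θ)) ≤
      ((Nat.factorial m : ℝ) * rexp (θ * (1 + |a|) ^ 2)) * rexp (-((4 * θ)⁻¹) * t ^ 2) := by
  intro t
  have h1 : |t| ^ m ≤ (Nat.factorial m : ℝ) * rexp |t| := pow_le_factorial_mul_exp m |t| (abs_nonneg t)
  have h2 : (1 + |a|) * |t| ≤ t ^ 2 / (4 * θ) + θ * (1 + |a|) ^ 2 := amgm_quarter hθ _ t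
  have h3 : a * |t| ≤ |a| * |t| := mul_le_mul_of_nonneg_right (le_abs_self a) (abs_nonneg t)
  calc |t| ^ m * rexp (a * |t|) * rexp (-t ^ 2 / (2 * θ))
      ≤ ((Nat.factorial m : ℝ) * rexp |t|) * rexp (a * |t|) * rexp (-t ^ 2 / (2 * θ)) := by
        apply mul_le_mul_of_nonneg_right (mul_le_mul_of_nonneg_right h1 (exp_pos _).le) (exp_pos _).le
    _ = (Nat.factorial m : ℝ) * rexp (|t| + a * |t| + -t ^ 2 / (2 * θ)) := by
        rw [Real.exp_add, Real.exp_add]; ring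
    _ ≤ (Nat.factorial m : ℝ) * rexp (θ * (1 + |a|) ^ 2 + -((4 * θ)⁻¹) * t ^ 2) := by
        apply mul_le_mul_of_nonneg_left (Real.exp_le_exp.2 ?_) (by positivity)
        have : |t| + a * |t| ≤ (1 + |a|) * |t| := by nlinarith
        have h4 : -t ^ 2 / (2 * θ) = -((4*θ)⁻¹) * t^2 - t^2/(4*θ) := by field_simp; ring
        nlinarith
    _ = ((Nat.factorial m : ℝ) * rexp (θ * (1 + |a|) ^ 2)) * rexp (-((4 * θ)⁻¹) * t ^ 2) := by
        rw [Real.exp_add]; ring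

lemma int1d {θ : ℝ} (hθ : 0 < θ) (m : ℕ) :
    Integrable (fun t : ℝ => t ^ m * rexp (-t ^ 2 / (2 * θ))) := by
  have hb : (0:ℝ) < (4 * θ)⁻¹ := by positivity
  apply Integrable.mono' ((integrable_exp_neg_mul_sq hb).const_mul ((Nat.factorial m : ℝ) * rexp (θ * (1 + |(0:ℝ)|) ^ 2)))
  · exact (continuous_pow m |>.mul (((continuous_pow 2).neg.div_const _).rexp)).aestronglyMeasurable
  · filter_upwards with t
    have := master1d hθ m 0 t
    simp only [zero_mul, Real.exp_zero, mul_one] at this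
    calc ‖t ^ m * rexp (-t ^ 2 / (2 * θ))‖ = |t| ^ m * rexp (-t ^ 2 / (2 * θ)) := by
          rw [norm_mul, norm_pow, Real.norm_eq_abs, Real.norm_eq_abs, abs_of_pos (exp_pos _)]
      _ ≤ _ := by simpa using this

lemma gauss_tend_zero {θ : ℝ} (hθ : 0 < θ) (m : ℕ) :
    Tendsto (fun t : ℝ => t ^ m * rexp (-t ^ 2 / (2 * θ))) atTop (nhds 0) ∧
    Tendsto (fun t : ℝ => t ^ m * rexp (-t ^ 2 / (2 * θ))) atBot (nhds 0) := by
  set K := (Nat.factorial m : ℝ) * rexp (θ * (1 + |(0:ℝ)|) ^ 2) with hK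
  set g := fun t : ℝ => K * rexp (-((4 * θ)⁻¹) * t ^ 2) with hg
  have hbound : ∀ t : ℝ, ‖t ^ m * rexp (-t ^ 2 / (2 * θ))‖ ≤ g t := by
    intro t
    have := master1d hθ m 0 t
    simp only [zero_mul, Real.exp_zero, mul_one] at this
    calc ‖t ^ m * rexp (-t ^ 2 / (2 * θ))‖ = |t| ^ m * rexp (-t ^ 2 / (2 * θ)) := by
          rw [norm_mul, norm_pow, Real.norm_eq_abs, Real.norm_eq_abs, abs_of_pos (exp_pos _)]
      _ ≤ _ := by simpa [hg, hK] using this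
  have hgtop : Tendsto g atTop (nhds 0) := by
    have h1 : Tendsto (fun t : ℝ => -((4 * θ)⁻¹ * t ^ 2)) atTop atBot :=
      tendsto_neg_atTop_atBot.comp ((tendsto_pow_atTop two_ne_zero).const_mul_atTop (by positivity))
    have h2 := Real.tendsto_exp_atBot.comp h1
    have : Tendsto (fun t : ℝ => K * rexp (-((4 * θ)⁻¹ * t ^ 2))) atTop (nhds (K * 0)) :=
      h2.const_mul K
    simpa [hg, neg_mul] using this
  have hgbot : Tendsto g atBot (nhds 0) := by
    have hgeq : g = g ∘ Neg.neg := by funext t; simp [hg, neg_sq]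
    rw [hgeq]
    exact hgtop.comp tendsto_neg_atBot_atTop
  exact ⟨squeeze_zero_norm hbound hgtop, squeeze_zero_norm hbound hgbot⟩

lemma J_rec {θ : ℝ} (hθ : 0 < θ) (m : ℕ) :
    ∫ t : ℝ, t ^ (m + 2) * rexp (-t ^ 2 / (2 * θ)) =
      θ * (m + 1) * ∫ t : ℝ, t ^ m * rexp (-t ^ 2 / (2 * θ)) := by
  set e := fun t : ℝ => rexp (-t ^ 2 / (2 * θ)) with he
  set f' := fun t : ℝ => ((m : ℝ) + 1) * (t ^ m * e t) - θ⁻¹ * (t ^ (m + 2) * e t) with hf'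
  have hderiv : ∀ t : ℝ, HasDerivAt (fun x : ℝ => x ^ (m + 1) * e x) (f' t) t := by
    intro t
    have hq : HasDerivAt (fun x : ℝ => -x ^ 2 / (2 * θ)) (-((2:ℕ) * t ^ 1) / (2 * θ)) t :=
      ((hasDerivAt_pow 2 t).neg).div_const (2 * θ)
    have hexp := hq.exp
    have h1 : HasDerivAt (fun x : ℝ => x ^ (m + 1) * rexp (-x ^ 2 / (2 * θ))) _ t :=
      (hasDerivAt_pow (m + 1) t).mul hexp
    convert h1 using 1
    simp only [hf', he, Nat.cast_ofNat, pow_one, Nat.cast_add, Nat.cast_one, Nat.add_sub_cancel]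
    field_simp
    ring
  have hint : Integrable f' :=
    ((int1d hθ m).const_mul _).sub ((int1d hθ (m + 2)).const_mul _)
  have htend := gauss_tend_zero hθ (m + 1)
  have h0 : ∫ t : ℝ, f' t = 0 - 0 :=
    integral_of_hasDerivAt_of_tendsto hderiv hint htend.2 htend.1
  rw [sub_zero] at h0
  have h2 : ∫ t : ℝ, f' t =
      ((m : ℝ) + 1) * (∫ t : ℝ, t ^ m * e t) - θ⁻¹ * ∫ t : ℝ, t ^ (m + 2) * e t := by
    rw [hf', integral_sub ((int1d hθ m).const_mul _) ((int1d hθ (m + 2)).const_mul _),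
      integral_const_mul, integral_const_mul]
  rw [h2] at h0
  have hθ' : θ ≠ 0 := ne_of_gt hθ
  simp only [he] at h0
  field_simp at h0 ⊢
  linarith [h0]

lemma J_odd {θ : ℝ} (m : ℕ) (hm : ¬ Even m) :
    ∫ t : ℝ, t ^ m * rexp (-t ^ 2 / (2 * θ)) = 0 := by
  have hodd : Odd m := Nat.not_even_iff_odd.1 hm
  have h := integral_neg_eq_self (μ := (volume : Measure ℝ))
    (f := fun t : ℝ => t ^ m * rexp (-t ^ 2 / (2 * θ)))
  have heq : ∀ t : ℝ, (-t) ^ m * rexp (-(-t) ^ 2 / (2 * θ)) =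
      -(t ^ m * rexp (-t ^ 2 / (2 * θ))) := by
    intro t; rw [hodd.neg_pow, neg_sq]; ring
  simp only [heq] at h
  rw [integral_neg] at h
  linarith [h]

lemma J_zero {θ : ℝ} (hθ : 0 < θ) :
    ∫ t : ℝ, rexp (-t ^ 2 / (2 * θ)) = Real.sqrt (2 * π * θ) := by
  have h := integral_gaussian (2 * θ)⁻¹
  have heq : ∀ t : ℝ, -(2 * θ)⁻¹ * t ^ 2 = -t ^ 2 / (2 * θ) := fun t => by ring
  simp_rw [heq] at h
  rw [h]
  congr 1
  field_simp

lemma J_val {θ : ℝ} (hθ : 0 < θ) : ∀ m : ℕ,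
    ∫ t : ℝ, t ^ m * rexp (-t ^ 2 / (2 * θ)) =
      (if Even m then (Nat.doubleFactorial (m - 1) : ℝ) * θ ^ (m / 2) else 0) *
        Real.sqrt (2 * π * θ)
  | 0 => by
    simpa [Nat.doubleFactorial] using J_zero hθ
  | 1 => by
    rw [J_odd 1 (by simp)]
    simp
  | (m + 2) => by
    rw [J_rec hθ m, J_val hθ m]
    have hdiv : (m + 2) / 2 = m / 2 + 1 := by omega
    by_cases hm : Even m
    · have hm2 : Even (m + 2) := by simpa [Nat.even_add] using hm
      have hdf : (Nat.doubleFactorial (m + 2 - 1) : ℝ) =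
          ((m : ℝ) + 1) * Nat.doubleFactorial (m - 1) := by
        cases m with
        | zero => simp [Nat.doubleFactorial]
        | succ m' =>
          have : m' + 1 + 2 - 1 = m' + 2 := by omega
          rw [this, Nat.doubleFactorial_add_two]
          push_cast
          ring
      rw [if_pos hm, if_pos hm2, hdiv, hdf]
      ring
    · have hm2 : ¬ Even (m + 2) := by simpa [Nat.even_add] using hm
      rw [if_neg hm, if_neg hm2]
      ring

lemma oneDim {θ : ℝ} (hθ : 0 < θ) (m : ℕ) :
    ∫ t : ℝ, t ^ m * ((2 * π * θ) ^ (-(1 : ℝ) / 2) * rexp (-t ^ 2 / (2 * θ))) =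
      if Even m then (Nat.doubleFactorial (m - 1) : ℝ) * θ ^ (m / 2) else 0 := by
  have h2πθ : (0 : ℝ) < 2 * π * θ := by positivity
  have heq : (fun t : ℝ => t ^ m * ((2 * π * θ) ^ (-(1 : ℝ) / 2) * rexp (-t ^ 2 / (2 * θ)))) =
      fun t : ℝ => (2 * π * θ) ^ (-(1 : ℝ) / 2) * (t ^ m * rexp (-t ^ 2 / (2 * θ))) := by
    funext t; ring
  rw [heq, integral_const_mul, J_val hθ m]
  rw [Real.sqrt_eq_rpow, ← mul_assoc, mul_comm ((2 * π * θ) ^ (-(1 : ℝ) / 2)), mul_assoc,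
    ← Real.rpow_add h2πθ]
  norm_num

open scoped RealInnerProductSpace

section Edim

variable {D : ℕ} {θ : ℝ}

local notation "E" => EuclideanSpace ℝ (Fin D)

noncomputable def gD (D : ℕ) (θ : ℝ) (x : EuclideanSpace ℝ (Fin D)) : ℝ :=
  (2 * π * θ) ^ (-(D : ℝ) / 2) * rexp (-‖x‖ ^ 2 / (2 * θ))

lemma gD_pos (hθ : 0 < θ) (x : E) : 0 < gD D θ x := by
  have : (0:ℝ) < 2 * π * θ := by positivity
  unfold gD; positivity

lemma integrable_base (hθ : 0 < θ) : Integrable (fun x : E => rexp (-(4 * θ)⁻¹ * ‖x‖ ^ 2)) := by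
  have hb : (0:ℝ) < ((((4 * θ)⁻¹ : ℝ) : ℂ)).re := by simpa using by positivity
  have h := (GaussianFourier.integrable_cexp_neg_mul_sq_norm_add (V := E) hb 0 0).norm
  apply h.congr
  filter_upwards with x
  rw [Complex.norm_exp]
  congr 1
  simp [Complex.ofReal_pow]
  exact Or.inl (by norm_cast)

lemma masterE (hθ : 0 < θ) (p : ℕ) (a : ℝ) :
    Integrable (fun x : E => ‖x‖ ^ p * rexp (a * ‖x‖) * rexp (-‖x‖ ^ 2 / (2 * θ))) := by
  apply Integrable.mono'
    ((integrable_base hθ).const_mul ((Nat.factorial p : ℝ) * rexp (θ * (1 + |a|) ^ 2)))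
  · apply Continuous.aestronglyMeasurable
    fun_prop
  · filter_upwards with x
    have h := master1d hθ p a ‖x‖
    rw [abs_of_nonneg (norm_nonneg x)] at h
    have hnn : 0 ≤ ‖x‖ ^ p * rexp (a * ‖x‖) * rexp (-‖x‖ ^ 2 / (2 * θ)) := by positivity
    rw [Real.norm_of_nonneg hnn]
    exact h

lemma integrable_inner_pow (hθ : 0 < θ) (n k : ℕ) (u v : E) :
    Integrable (fun x : E => ⟪x, v⟫ ^ n * ⟪x, u⟫ ^ k * gD D θ x) := by
  have h2πθ : (0:ℝ) < 2 * π * θ := by positivity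
  set C := ‖v‖ ^ n * ‖u‖ ^ k * (2 * π * θ) ^ (-(D:ℝ) / 2) with hC
  have hCnn : 0 ≤ C := by positivity
  apply Integrable.mono' ((masterE hθ (n + k) 0).const_mul C)
  · apply Continuous.aestronglyMeasurable
    have hv : Continuous fun x : E => ⟪x, v⟫ := continuous_id.inner continuous_const
    have hu : Continuous fun x : E => ⟪x, u⟫ := continuous_id.inner continuous_const
    unfold gD
    fun_prop
  · filter_upwards with x
    rw [norm_mul, norm_mul, norm_pow, norm_pow]
    have h1 : ‖⟪x, v⟫‖ ≤ ‖x‖ * ‖v‖ := norm_inner_le_norm x v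
    have h2 : ‖⟪x, u⟫‖ ≤ ‖x‖ * ‖u‖ := norm_inner_le_norm x u
    have hg : ‖gD D θ x‖ = (2 * π * θ) ^ (-(D:ℝ) / 2) * rexp (-‖x‖ ^ 2 / (2 * θ)) := by
      rw [Real.norm_of_nonneg (gD_pos hθ x).le]; rfl
    rw [hg]
    calc ‖⟪x, v⟫‖ ^ n * ‖⟪x, u⟫‖ ^ k * ((2 * π * θ) ^ (-(D:ℝ) / 2) * rexp (-‖x‖ ^ 2 / (2 * θ)))
        ≤ (‖x‖ * ‖v‖) ^ n * (‖x‖ * ‖u‖) ^ k *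
            ((2 * π * θ) ^ (-(D:ℝ) / 2) * rexp (-‖x‖ ^ 2 / (2 * θ))) := by
          have hA : ‖⟪x, v⟫‖ ^ n ≤ (‖x‖ * ‖v‖) ^ n :=
            pow_le_pow_left₀ (norm_nonneg _) h1 n
          have hB : ‖⟪x, u⟫‖ ^ k ≤ (‖x‖ * ‖u‖) ^ k :=
            pow_le_pow_left₀ (norm_nonneg _) h2 k
          have hpos : (0:ℝ) ≤ (2 * π * θ) ^ (-(D:ℝ) / 2) * rexp (-‖x‖ ^ 2 / (2 * θ)) := by
            positivity
          exact mul_le_mul (mul_le_mul hA hB (by positivity) (by positivity)) le_rfl hpos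
            (by positivity)
      _ = C * (‖x‖ ^ (n + k) * rexp (0 * ‖x‖) * rexp (-‖x‖ ^ 2 / (2 * θ))) := by
          rw [hC]; rw [zero_mul, Real.exp_zero]; ring

lemma coord_moment (hθ : 0 < θ) (hD : 1 ≤ D) (m : ℕ) :
    ∫ x : E, (x ⟨0, hD⟩ : ℝ) ^ m * gD D θ x =
      if Even m then (Nat.doubleFactorial (m - 1) : ℝ) * θ ^ (m / 2) else 0 := by
  have h2πθ : (0:ℝ) < 2 * π * θ := by positivity
  set i0 : Fin D := ⟨0, hD⟩
  have hmp := (EuclideanSpace.volume_preserving_symm_measurableEquiv_toLp (Fin D)).symm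
  rw [← hmp.integral_comp (MeasurableEquiv.measurableEmbedding _)]
  simp only [gD, Function.comp_def, MeasurableEquiv.symm_symm,
    MeasurableEquiv.coe_toLp, EuclideanSpace.norm_eq, PiLp.toLp_apply,
    Real.norm_eq_abs, sq_abs]
  have hsq : ∀ y : Fin D → ℝ, (Real.sqrt (∑ i, y i ^ 2)) ^ 2 = ∑ i, y i ^ 2 := fun y =>
    Real.sq_sqrt (by positivity)
  simp_rw [hsq]
  have hpowD : ((2 * π * θ) ^ (-(1:ℝ) / 2)) ^ (D : ℕ) = (2 * π * θ) ^ (-(D:ℝ) / 2) := by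
    rw [← Real.rpow_natCast ((2 * π * θ) ^ (-(1:ℝ) / 2)) D, ← Real.rpow_mul h2πθ.le]
    congr 1
    ring
  have key : ∀ y : Fin D → ℝ,
      (y i0) ^ m * ((2 * π * θ) ^ (-(D:ℝ) / 2) * rexp (-(∑ i, y i ^ 2) / (2 * θ))) =
      ∏ i, ((y i) ^ (if i = i0 then m else 0) *
        ((2 * π * θ) ^ (-(1:ℝ) / 2) * rexp (-(y i) ^ 2 / (2 * θ)))) := by
    intro y
    rw [Finset.prod_mul_distrib, Finset.prod_mul_distrib, Finset.prod_const]
    simp only [Finset.card_univ, Fintype.card_fin]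
    rw [hpowD, ← Real.exp_sum]
    have h1 : ∏ i, (y i) ^ (if i = i0 then m else 0) = (y i0) ^ m := by
      simp [apply_ite (fun p => (y _) ^ p)]
    have h2 : ∑ i, -(y i) ^ 2 / (2 * θ) = -(∑ i, y i ^ 2) / (2 * θ) := by
      rw [← Finset.sum_div, ← Finset.sum_neg_distrib]
    rw [h1, h2]
  rw [integral_congr_ae (Filter.Eventually.of_forall key)]
  rw [MeasureTheory.integral_fintype_prod_volume_eq_prod
    (f := fun i t => t ^ (if i = i0 then m else 0) *
      ((2 * π * θ) ^ (-(1:ℝ) / 2) * rexp (-t ^ 2 / (2 * θ))))]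
  have hfac : ∀ i : Fin D, (∫ t : ℝ, t ^ (if i = i0 then m else 0) *
      ((2 * π * θ) ^ (-(1:ℝ) / 2) * rexp (-t ^ 2 / (2 * θ)))) =
      if i = i0 then (if Even m then (Nat.doubleFactorial (m - 1) : ℝ) * θ ^ (m / 2) else 0)
      else 1 := by
    intro i
    by_cases hi : i = i0
    · rw [if_pos hi, if_pos hi, oneDim hθ m]
    · rw [if_neg hi, if_neg hi, oneDim hθ 0]
      simp [Nat.doubleFactorial]
  simp_rw [hfac]
  simp

lemma gauss_moment (hθ : 0 < θ) (hD : 1 ≤ D) (m : ℕ) (z : E) :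
    ∫ x : E, ⟪x, z⟫ ^ m * gD D θ x =
      if Even m then (Nat.doubleFactorial (m - 1) : ℝ) * θ ^ (m / 2) * ‖z‖ ^ m else 0 := by
  set i0 : Fin D := ⟨0, hD⟩
  set e0 : E := EuclideanSpace.single i0 (1:ℝ) with he0def
  have he0 : ‖e0‖ = 1 := by simp [he0def]
  have hbase : ∫ x : E, ⟪x, e0⟫ ^ m * gD D θ x =
      if Even m then (Nat.doubleFactorial (m - 1) : ℝ) * θ ^ (m / 2) else 0 := by
    have : ∀ x : E, ⟪x, e0⟫ = x i0 := by
      intro x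
      rw [he0def, EuclideanSpace.inner_single_right]
      simp
    simp_rw [this]
    exact coord_moment hθ hD m
  by_cases hz : z = 0
  · subst hz
    cases m with
    | zero =>
      simp only [inner_zero_right, pow_zero, one_mul, norm_zero]
      have := hbase
      simp only [pow_zero, one_mul] at this ⊢
      rw [this]
      simp [Nat.doubleFactorial]
    | succ m' =>
      simp [zero_pow (Nat.succ_ne_zero m')]
  · have hr : (0:ℝ) < ‖z‖ := norm_pos_iff.2 hz
    set r := ‖z‖ with hrdef
    set e' : E := r⁻¹ • z with he'def
    have he' : ‖e'‖ = 1 := by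
      rw [he'def, norm_smul, norm_inv, norm_norm, ← hrdef, inv_mul_cancel₀ hr.ne']
    have hz' : z = r • e' := by
      rw [he'def, smul_smul, mul_inv_cancel₀ hr.ne', one_smul]
    set T := Submodule.reflection (ℝ ∙ (e0 - e'))ᗮ with hTdef
    have hT : T e0 = e' := Submodule.reflection_sub (by rw [he0, he'])
    have hrot : ∫ x : E, ⟪x, e'⟫ ^ m * gD D θ x = ∫ x : E, ⟪x, e0⟫ ^ m * gD D θ x := by
      rw [← (T.measurePreserving).integral_comp T.toHomeomorph.measurableEmbedding
        (fun x => ⟪x, e'⟫ ^ m * gD D θ x)]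
      congr 1
      funext x
      rw [← hT, LinearIsometryEquiv.inner_map_map]
      unfold gD
      rw [T.norm_map]
    have hinner : ∀ x : E, ⟪x, z⟫ = r * ⟪x, e'⟫ := by
      intro x
      rw [hz', real_inner_smul_right]
    simp_rw [hinner, mul_pow, mul_assoc]
    rw [integral_const_mul, hrot, hbase]
    by_cases hm : Even m
    · rw [if_pos hm, if_pos hm]
      ring
    · rw [if_neg hm, if_neg hm]
      ring

lemma polarize {bb : ℕ} (hθ : 0 < θ) (hD : 1 ≤ D)
    (c : Fin (bb + 1) → E) (w : Fin (bb + 1) → ℝ)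
    (hiso : ∀ (m : ℕ) (z : E), ∑ α : Fin (bb + 1), w α * ⟪c α, z⟫ ^ m =
      if Even m then (Nat.doubleFactorial (m - 1) : ℝ) * θ ^ (m / 2) * ‖z‖ ^ m else 0)
    (n k : ℕ) (u v : E) :
    ∑ α : Fin (bb + 1), w α * (⟪c α, v⟫ ^ n * ⟪c α, u⟫ ^ k) =
      ∫ x : E, ⟪x, v⟫ ^ n * ⟪x, u⟫ ^ k * gD D θ x := by
  set m := n + k with hm
  set Sj : ℕ → ℝ := fun j => ∑ α : Fin (bb + 1), w α * (⟪c α, v⟫ ^ j * ⟪c α, u⟫ ^ (m - j))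
    with hSj
  set Mj : ℕ → ℝ := fun j => ∫ x : E, ⟪x, v⟫ ^ j * ⟪x, u⟫ ^ (m - j) * gD D θ x with hMj
  have hnm : n ≤ m := by omega
  have hkm : m - n = k := by omega
  -- continuum expansion
  have hcont : ∀ s : ℝ, ∫ x : E, ⟪x, v + s • u⟫ ^ m * gD D θ x =
      ∑ j ∈ range (m + 1), (m.choose j : ℝ) * s ^ (m - j) * Mj j := by
    intro s
    have hpt : ∀ x : E, ⟪x, v + s • u⟫ ^ m * gD D θ x =
        ∑ j ∈ range (m + 1),
          (m.choose j : ℝ) * s ^ (m - j) * (⟪x, v⟫ ^ j * ⟪x, u⟫ ^ (m - j) * gD D θ x) := by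
      intro x
      rw [inner_add_right, real_inner_smul_right, add_pow, Finset.sum_mul]
      congr 1
      funext j
      rw [mul_pow]
      ring
    simp_rw [hpt]
    rw [integral_finset_sum _ (fun j _ => ?_)]
    · exact Finset.sum_congr rfl fun j _ => by rw [integral_const_mul]
    · exact (integrable_inner_pow hθ j (m - j) u v).const_mul _
  -- discrete expansion
  have hdisc : ∀ s : ℝ, ∑ α : Fin (bb + 1), w α * ⟪c α, v + s • u⟫ ^ m =
      ∑ j ∈ range (m + 1), (m.choose j : ℝ) * s ^ (m - j) * Sj j := by
    intro s
    have hpt : ∀ α, w α * ⟪c α, v + s • u⟫ ^ m =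
        ∑ j ∈ range (m + 1),
          (m.choose j : ℝ) * s ^ (m - j) * (w α * (⟪c α, v⟫ ^ j * ⟪c α, u⟫ ^ (m - j))) := by
      intro α
      rw [inner_add_right, real_inner_smul_right, add_pow, Finset.mul_sum]
      congr 1
      funext j
      rw [mul_pow]
      ring
    simp_rw [hpt]
    rw [Finset.sum_comm]
    exact Finset.sum_congr rfl fun j _ => by rw [← Finset.mul_sum]
  have key : ∀ s : ℝ, ∑ j ∈ range (m + 1),
      (m.choose j : ℝ) * (Sj j - Mj j) * s ^ (m - j) = 0 := by
    intro s
    have h1 := hdisc s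
    have h2 := hcont s
    rw [hiso m (v + s • u)] at h1
    rw [gauss_moment hθ hD m (v + s • u)] at h2
    have h3 : ∑ j ∈ range (m + 1), (m.choose j : ℝ) * s ^ (m - j) * Sj j =
        ∑ j ∈ range (m + 1), (m.choose j : ℝ) * s ^ (m - j) * Mj j := by rw [← h1, ← h2]
    calc ∑ j ∈ range (m + 1), (m.choose j : ℝ) * (Sj j - Mj j) * s ^ (m - j)
        = (∑ j ∈ range (m + 1), (m.choose j : ℝ) * s ^ (m - j) * Sj j) -
          ∑ j ∈ range (m + 1), (m.choose j : ℝ) * s ^ (m - j) * Mj j := by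
          rw [← Finset.sum_sub_distrib]
          exact Finset.sum_congr rfl fun j _ => by ring
      _ = 0 := by rw [h3, sub_self]
  -- polynomial argument
  set p : Polynomial ℝ := ∑ j ∈ range (m + 1),
    Polynomial.C ((m.choose j : ℝ) * (Sj j - Mj j)) * Polynomial.X ^ (m - j) with hp
  have hpeval : ∀ s : ℝ, p.eval s = 0 := by
    intro s
    rw [hp, Polynomial.eval_finset_sum]
    simpa using key s
  have hp0 : p = 0 := Polynomial.funext fun s => by rw [hpeval s, Polynomial.eval_zero]
  have hcoeff : p.coeff k = (m.choose n : ℝ) * (Sj n - Mj n) := by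
    rw [hp, Polynomial.finset_sum_coeff]
    rw [Finset.sum_eq_single n]
    · rw [Polynomial.coeff_C_mul, Polynomial.coeff_X_pow, hkm, if_pos rfl, mul_one]
    · intro j hj hjn
      rw [Polynomial.coeff_C_mul, Polynomial.coeff_X_pow, if_neg, mul_zero]
      simp only [Finset.mem_range] at hj
      omega
    · intro hn
      exact absurd (Finset.mem_range.2 (by omega)) hn
  rw [hp0, Polynomial.coeff_zero] at hcoeff
  have hchoose : (m.choose n : ℝ) ≠ 0 := by
    exact_mod_cast (Nat.choose_pos hnm).ne'
  have hSM : Sj n = Mj n := by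
    rcases mul_eq_zero.1 hcoeff.symm with h | h
    · exact absurd h hchoose
    · linarith [sub_eq_zero.1 h]
  have : Sj n = ∑ α : Fin (bb + 1), w α * (⟪c α, v⟫ ^ n * ⟪c α, u⟫ ^ k) := by
    rw [hSj]; simp only [hkm]
  rw [← this, hSM, hMj]
  simp only [hkm]

lemma integrable_dom (hθ : 0 < θ) (n : ℕ) (u v : E) :
    Integrable (fun x : E => rexp (|⟪x, u⟫| / θ) * (|⟪x, v⟫| ^ n * gD D θ x)) := by
  have h2πθ : (0:ℝ) < 2 * π * θ := by positivity
  apply Integrable.mono'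
    ((masterE hθ n (‖u‖ / θ)).const_mul (‖v‖ ^ n * (2 * π * θ) ^ (-(D:ℝ) / 2)))
  · apply Continuous.aestronglyMeasurable
    have hv : Continuous fun x : E => ⟪x, v⟫ := continuous_id.inner continuous_const
    have hu : Continuous fun x : E => ⟪x, u⟫ := continuous_id.inner continuous_const
    unfold gD
    fun_prop
  · filter_upwards with x
    have hg : 0 < gD D θ x := gD_pos hθ x
    have hnn : 0 ≤ rexp (|⟪x, u⟫| / θ) * (|⟪x, v⟫| ^ n * gD D θ x) := by positivity
    rw [Real.norm_of_nonneg hnn]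
    have h1 : |⟪x, u⟫| / θ ≤ ‖u‖ / θ * ‖x‖ := by
      have hb := abs_real_inner_le_norm x u
      rw [div_le_iff₀ hθ]
      calc |⟪x, u⟫| ≤ ‖x‖ * ‖u‖ := hb
        _ = ‖u‖ / θ * ‖x‖ * θ := by field_simp
    have h2 : |⟪x, v⟫| ^ n ≤ ‖v‖ ^ n * ‖x‖ ^ n := by
      calc |⟪x, v⟫| ^ n ≤ (‖x‖ * ‖v‖) ^ n :=
            pow_le_pow_left₀ (abs_nonneg _) (abs_real_inner_le_norm x v) n
        _ = ‖v‖ ^ n * ‖x‖ ^ n := by rw [mul_pow]; ring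
    calc rexp (|⟪x, u⟫| / θ) * (|⟪x, v⟫| ^ n * gD D θ x)
        ≤ rexp (‖u‖ / θ * ‖x‖) * ((‖v‖ ^ n * ‖x‖ ^ n) * gD D θ x) :=
          mul_le_mul (Real.exp_le_exp.2 h1) (mul_le_mul_of_nonneg_right h2 hg.le)
            (by positivity) (Real.exp_pos _).le
      _ = ‖v‖ ^ n * (2 * π * θ) ^ (-(D:ℝ) / 2) *
            (‖x‖ ^ n * rexp (‖u‖ / θ * ‖x‖) * rexp (-‖x‖ ^ 2 / (2 * θ))) := by
          unfold gD; ring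

lemma series_cont (hθ : 0 < θ) (n : ℕ) (u v : E) :
    ∫ x : E, ⟪x, v⟫ ^ n * rexp (⟪x, u⟫ / θ) * gD D θ x =
      ∑' k : ℕ, (θ ^ k * (Nat.factorial k : ℝ))⁻¹ *
        ∫ x : E, ⟪x, v⟫ ^ n * ⟪x, u⟫ ^ k * gD D θ x := by
  set F : ℕ → E → ℝ := fun k x => (⟪x, u⟫ / θ) ^ k / (Nat.factorial k : ℝ) *
    (⟪x, v⟫ ^ n * gD D θ x) with hF
  have hFeq : ∀ k, F k = fun x : E =>
      (θ ^ k * (Nat.factorial k : ℝ))⁻¹ * (⟪x, v⟫ ^ n * ⟪x, u⟫ ^ k * gD D θ x) := by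
    intro k
    funext x
    rw [hF]
    simp only [div_pow]
    have hfk : (Nat.factorial k : ℝ) ≠ 0 := by positivity
    field_simp
  have hFint : ∀ k, Integrable (F k) := by
    intro k
    rw [hFeq k]
    exact (integrable_inner_pow hθ n k u v).const_mul _
  have hFtsum : ∀ x : E, ∑' k, F k x = ⟪x, v⟫ ^ n * rexp (⟪x, u⟫ / θ) * gD D θ x := by
    intro x
    rw [hF]
    rw [tsum_mul_right]
    have hexp : rexp (⟪x, u⟫ / θ) = ∑' k : ℕ, (⟪x, u⟫ / θ) ^ k / (Nat.factorial k : ℝ) := by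
      rw [Real.exp_eq_exp_ℝ, NormedSpace.exp_eq_tsum_div]
    rw [← hexp]
    ring
  have habs : ∀ (k : ℕ) (x : E), ‖F k x‖ =
      |⟪x, u⟫ / θ| ^ k / (Nat.factorial k : ℝ) * (|⟪x, v⟫| ^ n * gD D θ x) := by
    intro k x
    rw [hF]
    have hg : 0 < gD D θ x := gD_pos hθ x
    rw [Real.norm_eq_abs, abs_mul, abs_mul, abs_div, abs_pow, abs_pow,
      Nat.abs_cast, abs_of_pos hg]
  have hFsum : Summable fun k => ∫ x : E, ‖F k x‖ := by
    apply summable_of_sum_range_le (c := ∫ x : E, rexp (|⟪x, u⟫| / θ) * (|⟪x, v⟫| ^ n * gD D θ x))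
      (fun k => integral_nonneg fun x => norm_nonneg _)
    intro K
    rw [← integral_finset_sum _ (fun k _ => (hFint k).norm)]
    apply integral_mono (integrable_finset_sum _ (fun k _ => (hFint k).norm))
      (integrable_dom hθ n u v)
    intro x
    simp only [habs]
    rw [← Finset.sum_mul]
    apply mul_le_mul_of_nonneg_right _
      (mul_nonneg (pow_nonneg (abs_nonneg _) n) (gD_pos hθ x).le)
    have := Real.sum_le_exp_of_nonneg (abs_nonneg (⟪x, u⟫ / θ)) K
    calc ∑ k ∈ range K, |⟪x, u⟫ / θ| ^ k / (Nat.factorial k : ℝ) ≤ rexp |⟪x, u⟫ / θ| := this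
      _ = rexp (|⟪x, u⟫| / θ) := by rw [abs_div, abs_of_pos hθ]
  have hswap := integral_tsum_of_summable_integral_norm hFint hFsum
  calc ∫ x : E, ⟪x, v⟫ ^ n * rexp (⟪x, u⟫ / θ) * gD D θ x
      = ∫ x : E, ∑' k, F k x :=
        integral_congr_ae (Filter.Eventually.of_forall fun x => (hFtsum x).symm)
    _ = ∑' k, ∫ x : E, F k x := hswap.symm
    _ = ∑' k : ℕ, (θ ^ k * (Nat.factorial k : ℝ))⁻¹ *
        ∫ x : E, ⟪x, v⟫ ^ n * ⟪x, u⟫ ^ k * gD D θ x :=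
        tsum_congr fun k => by rw [hFeq k, integral_const_mul]

end Edim

/-- **Theorem 1 (directional form).** If a lattice velocity model satisfies the
isotropy condition of every order `m`, then all discrete directional moments
equal the continuum directional moments of the Maxwell–Boltzmann distribution. -/
theorem discrete_moments_eq_continuum_moments
    (D b : ℕ) (hD : 1 ≤ D) (θ : ℝ) (hθ : 0 < θ)
    (c : Fin (b + 1) → EuclideanSpace ℝ (Fin D)) (w : Fin (b + 1) → ℝ)
    (hiso : ∀ m : ℕ, Isotropy θ c w m) :
    ∀ (n : ℕ) (u v : EuclideanSpace ℝ (Fin D)),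
      discMoment θ c w u v n = contMoment D θ u v n := by
  intro n u v
  have hiso' : ∀ (m : ℕ) (z : EuclideanSpace ℝ (Fin D)),
      ∑ α : Fin (b + 1), w α * ⟪c α, z⟫ ^ m =
      if Even m then (Nat.doubleFactorial (m - 1) : ℝ) * θ ^ (m / 2) * ‖z‖ ^ m else 0 :=
    fun m z => hiso m z
  -- continuum side
  have hcont : contMoment D θ u v n = rexp (-‖u‖ ^ 2 / (2 * θ)) *
      ∫ x : EuclideanSpace ℝ (Fin D), ⟪x, v⟫ ^ n * rexp (⟪x, u⟫ / θ) * gD D θ x := by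
    unfold contMoment
    rw [← integral_const_mul]
    apply integral_congr_ae
    filter_upwards with x
    have hns : ‖x - u‖ ^ 2 = ‖x‖ ^ 2 - 2 * ⟪x, u⟫ + ‖u‖ ^ 2 := by
      rw [@norm_sub_sq_real]
    have h3 : rexp (-‖u‖ ^ 2 / (2 * θ)) * rexp (⟪x, u⟫ / θ) * rexp (-‖x‖ ^ 2 / (2 * θ)) =
        rexp (-‖x - u‖ ^ 2 / (2 * θ)) := by
      rw [← Real.exp_add, ← Real.exp_add]
      congr 1
      rw [hns]
      field_simp
      ring
    unfold gD
    rw [← h3]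
    ring
  -- discrete side
  have hsummand : ∀ α : Fin (b + 1),
      w α * (⟪c α, v⟫ ^ n * rexp (⟪c α, u⟫ / θ)) =
      ∑' k : ℕ, (w α * ⟪c α, v⟫ ^ n) * ((⟪c α, u⟫ / θ) ^ k / (Nat.factorial k : ℝ)) := by
    intro α
    rw [tsum_mul_left]
    rw [Real.exp_eq_exp_ℝ, NormedSpace.exp_eq_tsum_div]
    ring
  have hdisc : discMoment θ c w u v n = rexp (-‖u‖ ^ 2 / (2 * θ)) *
      ∑ α : Fin (b + 1), w α * (⟪c α, v⟫ ^ n * rexp (⟪c α, u⟫ / θ)) := by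
    unfold discMoment discEquil
    rw [Finset.mul_sum]
    apply Finset.sum_congr rfl
    intro α _
    ring
  have hswap : ∑ α : Fin (b + 1), w α * (⟪c α, v⟫ ^ n * rexp (⟪c α, u⟫ / θ)) =
      ∑' k : ℕ, ∑ α : Fin (b + 1),
        (w α * ⟪c α, v⟫ ^ n) * ((⟪c α, u⟫ / θ) ^ k / (Nat.factorial k : ℝ)) := by
    simp_rw [hsummand]
    rw [Summable.tsum_finsetSum]
    intro α _
    exact (Real.summable_pow_div_factorial _).mul_left _
  have hterm : ∀ k : ℕ, ∑ α : Fin (b + 1),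
      (w α * ⟪c α, v⟫ ^ n) * ((⟪c α, u⟫ / θ) ^ k / (Nat.factorial k : ℝ)) =
      (θ ^ k * (Nat.factorial k : ℝ))⁻¹ *
        ∑ α : Fin (b + 1), w α * (⟪c α, v⟫ ^ n * ⟪c α, u⟫ ^ k) := by
    intro k
    rw [Finset.mul_sum]
    apply Finset.sum_congr rfl
    intro α _
    rw [div_pow]
    have h1 : (Nat.factorial k : ℝ) ≠ 0 := by positivity
    field_simp
  rw [hdisc, hswap, hcont]
  congr 1
  calc ∑' k : ℕ, ∑ α : Fin (b + 1),
        (w α * ⟪c α, v⟫ ^ n) * ((⟪c α, u⟫ / θ) ^ k / (Nat.factorial k : ℝ))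
      = ∑' k : ℕ, (θ ^ k * (Nat.factorial k : ℝ))⁻¹ *
          ∑ α : Fin (b + 1), w α * (⟪c α, v⟫ ^ n * ⟪c α, u⟫ ^ k) := tsum_congr hterm
    _ = ∑' k : ℕ, (θ ^ k * (Nat.factorial k : ℝ))⁻¹ *
          ∫ x : EuclideanSpace ℝ (Fin D), ⟪x, v⟫ ^ n * ⟪x, u⟫ ^ k * gD D θ x :=
        tsum_congr fun k => by rw [polarize hθ hD c w hiso' n k u v]
    _ = ∫ x : EuclideanSpace ℝ (Fin D), ⟪x, v⟫ ^ n * rexp (⟪x, u⟫ / θ) * gD D θ x :=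
        (series_cont hθ n u v).symm
end

section
/- Let D ≥ 1, θ > 0, u, v ∈ ℝ^D, and n ∈ ℕ. Then the directional continuum moment admits the derivative representation M^{(n)}_v(u) = exp(−‖u‖²/(2θ)) · θ^n · (d^n/dt^n)|_{t=0} exp(‖u + t v‖²/(2θ)), i.e. the n-th moment tensor contracted with v^{⊗n} equals exp(−‖u‖²/(2θ)) θ^n times the n-th directional derivative in direction v of exp(‖u‖²/(2θ)). -/
open MeasureTheory Real Finset

namespace ContMomentAux

lemma cd_of_inf {f : ℝ → ℝ} {n : ℕ} (hf : ContDiff ℝ (⊤ : ℕ∞) f) : ContDiff ℝ n f :=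
  hf.of_le (by exact_mod_cast le_top)

lemma itd_add {f g : ℝ → ℝ} {n : ℕ} {x : ℝ} (hf : ContDiff ℝ (⊤ : ℕ∞) f)
    (hg : ContDiff ℝ (⊤ : ℕ∞) g) :
    iteratedDeriv n (fun y => f y + g y) x = iteratedDeriv n f x + iteratedDeriv n g x := by
  simp_rw [← iteratedDerivWithin_univ]
  exact iteratedDerivWithin_add (Set.mem_univ x) uniqueDiffOn_univ
    (cd_of_inf hf).contDiffWithinAt (cd_of_inf hg).contDiffWithinAt

lemma itd_cmul {f : ℝ → ℝ} {n : ℕ} {x : ℝ} (c : ℝ) (hf : ContDiff ℝ (⊤ : ℕ∞) f) :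
    iteratedDeriv n (fun y => c * f y) x = c * iteratedDeriv n f x := by
  simp_rw [← iteratedDerivWithin_univ]
  exact iteratedDerivWithin_const_mul (Set.mem_univ x) uniqueDiffOn_univ c
    (cd_of_inf hf).contDiffWithinAt

lemma itd_id_mul {n : ℕ} : ∀ (f : ℝ → ℝ), ContDiff ℝ (⊤ : ℕ∞) f →
    iteratedDeriv (n + 1) (fun s => s * f s) 0 = (n + 1 : ℝ) * iteratedDeriv n f 0 := by
  induction n with
  | zero =>
    intro f hf
    have h : HasDerivAt (fun s : ℝ => s * f s) (1 * f 0 + 0 * deriv f 0) 0 :=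
      (hasDerivAt_id 0).mul ((hf.differentiable (by simp)) 0).hasDerivAt
    rw [zero_add, iteratedDeriv_one, iteratedDeriv_zero, h.deriv]; push_cast; ring
  | succ m ih =>
    intro f hf
    have hf' : ContDiff ℝ (⊤ : ℕ∞) (deriv f) := (contDiff_infty_iff_deriv.mp hf).2
    have hd : deriv (fun s : ℝ => s * f s) = fun s => f s + s * deriv f s := by
      funext s
      have h : HasDerivAt (fun s : ℝ => s * f s) (1 * f s + s * deriv f s) s :=
        (hasDerivAt_id s).mul ((hf.differentiable (by simp)) s).hasDerivAt
      rw [h.deriv]; ring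
    have hg : ContDiff ℝ (⊤ : ℕ∞) (fun s : ℝ => s * deriv f s) := by
      exact contDiff_id.mul hf'
    rw [iteratedDeriv_succ', hd, itd_add hf hg,
      ih (deriv f) hf', ← iteratedDeriv_succ']
    push_cast; ring

lemma itd_id_mul' {n : ℕ} (f : ℝ → ℝ) (hf : ContDiff ℝ (⊤ : ℕ∞) f) :
    iteratedDeriv n (fun s => s * f s) 0 = (n : ℝ) * iteratedDeriv (n - 1) f 0 := by
  cases n with
  | zero => simp
  | succ m => simpa using itd_id_mul f hf

lemma integrable_pow_gauss {b : ℝ} (hb : 0 < b) (k : ℕ) :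
    Integrable (fun t : ℝ => t ^ k * rexp (-b * t ^ 2)) := by
  have := integrable_rpow_mul_exp_neg_mul_sq hb (s := (k : ℝ))
    (by exact_mod_cast lt_of_lt_of_le (by norm_num : (-1:ℝ) < 0) (Nat.cast_nonneg k))
  simpa [Real.rpow_natCast] using this

lemma integrable_aux {θ : ℝ} (hθ : 0 < θ) (μ σ : ℝ) (j i : ℕ) :
    Integrable (fun t : ℝ => (μ + σ * t) ^ j * (t ^ i * rexp (-(2 * θ)⁻¹ * t ^ 2))) := by
  have hb : 0 < (2 * θ)⁻¹ := by positivity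
  have key : ∀ t : ℝ, (μ + σ * t) ^ j * (t ^ i * rexp (-(2 * θ)⁻¹ * t ^ 2))
      = ∑ m ∈ Finset.range (j + 1),
          (μ ^ m * σ ^ (j - m) * (j.choose m : ℝ))
            * (t ^ (j - m + i) * rexp (-(2 * θ)⁻¹ * t ^ 2)) := by
    intro t
    rw [add_pow, Finset.sum_mul]
    refine Finset.sum_congr rfl fun m _ => ?_
    rw [mul_pow, pow_add]
    ring
  have hsum : Integrable (fun t : ℝ => ∑ m ∈ Finset.range (j + 1),
      (μ ^ m * σ ^ (j - m) * (j.choose m : ℝ))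
        * (t ^ (j - m + i) * rexp (-(2 * θ)⁻¹ * t ^ 2))) :=
    integrable_finset_sum _ (fun m _ =>
      (integrable_pow_gauss hb (j - m + i)).const_mul (μ ^ m * σ ^ (j - m) * (j.choose m : ℝ)))
  exact hsum.congr (ae_of_all _ fun t => (key t).symm)

lemma integral_mul_gauss_ibp {θ : ℝ} (hθ : 0 < θ) (μ σ : ℝ) (n : ℕ) :
    ∫ t : ℝ, (μ + σ * t) ^ n * (t * rexp (-(2 * θ)⁻¹ * t ^ 2))
      = ((n : ℝ) * σ * θ) * ∫ t : ℝ, (μ + σ * t) ^ (n - 1) * rexp (-(2 * θ)⁻¹ * t ^ 2) := by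
  have hθ' : θ ≠ 0 := ne_of_gt hθ
  have hu : ∀ t : ℝ, HasDerivAt (fun t : ℝ => (μ + σ * t) ^ n)
      ((n : ℝ) * (μ + σ * t) ^ (n - 1) * σ) t := fun t => by
    simpa using (((hasDerivAt_id t).const_mul σ).const_add μ).fun_pow n
  have hv : ∀ t : ℝ, HasDerivAt (fun t : ℝ => -θ * rexp (-(2 * θ)⁻¹ * t ^ 2))
      (t * rexp (-(2 * θ)⁻¹ * t ^ 2)) t := fun t => by
    have h1 : HasDerivAt (fun t : ℝ => -(2 * θ)⁻¹ * t ^ 2) (-(2 * θ)⁻¹ * (2 * t)) t := by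
      simpa using ((hasDerivAt_pow 2 t).const_mul (-(2 * θ)⁻¹))
    have h2 := (h1.exp).const_mul (-θ)
    refine h2.congr_deriv ?_
    field_simp
  have h1 : Integrable (fun t : ℝ => (μ + σ * t) ^ n * (t * rexp (-(2 * θ)⁻¹ * t ^ 2))) := by
    simpa using integrable_aux hθ μ σ n 1
  have h2 : Integrable (fun t : ℝ =>
      ((n : ℝ) * (μ + σ * t) ^ (n - 1) * σ) * (-θ * rexp (-(2 * θ)⁻¹ * t ^ 2))) := by
    have := (integrable_aux hθ μ σ (n - 1) 0).const_mul ((n : ℝ) * σ * (-θ))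
    refine this.congr (ae_of_all _ fun t => ?_)
    simp only [pow_zero]
    ring
  have h3 : Integrable (fun t : ℝ => (μ + σ * t) ^ n * (-θ * rexp (-(2 * θ)⁻¹ * t ^ 2))) := by
    have := (integrable_aux hθ μ σ n 0).const_mul (-θ)
    refine this.congr (ae_of_all _ fun t => ?_)
    simp only [pow_zero]
    ring
  have := integral_mul_deriv_eq_deriv_mul_of_integrable (fun t _ => hu t) (fun t _ => hv t) h1 h2 h3
  rw [this, ← integral_neg, ← integral_const_mul]
  refine integral_congr_ae (ae_of_all _ fun t => ?_)
  ring

lemma g_smooth (μ B : ℝ) : ContDiff ℝ (⊤ : ℕ∞) (fun s : ℝ => rexp (μ * s + B * s ^ 2)) := by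
  apply Real.contDiff_exp.comp
  fun_prop

lemma K_succ (μ B : ℝ) (n : ℕ) :
    iteratedDeriv (n + 1) (fun s : ℝ => rexp (μ * s + B * s ^ 2)) 0
      = μ * iteratedDeriv n (fun s : ℝ => rexp (μ * s + B * s ^ 2)) 0
        + (2 * B) * (n : ℝ)
          * iteratedDeriv (n - 1) (fun s : ℝ => rexp (μ * s + B * s ^ 2)) 0 := by
  set g : ℝ → ℝ := fun s => rexp (μ * s + B * s ^ 2) with hg
  have hgs := g_smooth μ B
  have hd : deriv g = fun s => μ * g s + (2 * B) * (s * g s) := by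
    funext s
    have hin : HasDerivAt (fun s : ℝ => μ * s + B * s ^ 2) (μ + B * (2 * s)) s := by
      have h1 : HasDerivAt (fun s : ℝ => μ * s) (μ * 1) s := (hasDerivAt_id s).const_mul μ
      have h2 : HasDerivAt (fun s : ℝ => B * s ^ 2) (B * (2 * s)) s := by
        simpa using (hasDerivAt_pow 2 s).const_mul B
      simpa using h1.fun_add h2
    have := hin.exp
    rw [this.deriv]
    simp only [hg]
    ring
  have hsm1 : ContDiff ℝ (⊤ : ℕ∞) (fun s : ℝ => μ * g s) := by
    rw [hg]; fun_prop
  have hsm2 : ContDiff ℝ (⊤ : ℕ∞) (fun s : ℝ => (2 * B) * (s * g s)) := by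
    rw [hg]; fun_prop
  have hsm3 : ContDiff ℝ (⊤ : ℕ∞) (fun s : ℝ => s * g s) := by
    rw [hg]; fun_prop
  rw [iteratedDeriv_succ', hd, itd_add hsm1 hsm2, itd_cmul μ hgs, itd_cmul (2 * B) hsm3,
    itd_id_mul' g hgs]
  ring

lemma moment1D {θ : ℝ} (hθ : 0 < θ) (μ σ : ℝ) (n : ℕ) :
    ∫ t : ℝ, (μ + σ * t) ^ n * rexp (-(2 * θ)⁻¹ * t ^ 2)
      = Real.sqrt (2 * π * θ)
        * iteratedDeriv n (fun s : ℝ => rexp (μ * s + (θ * σ ^ 2 / 2) * s ^ 2)) 0 := by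
  induction n using Nat.strong_induction_on with
  | _ n ih =>
    cases n with
    | zero =>
      simp only [pow_zero, one_mul, iteratedDeriv_zero]
      rw [integral_gaussian]
      have h : π / (2 * θ)⁻¹ = 2 * π * θ := by
        field_simp
      rw [h]
      norm_num
    | succ m =>
      have Im : Integrable (fun t : ℝ => (μ + σ * t) ^ m * rexp (-(2 * θ)⁻¹ * t ^ 2)) := by
        simpa using integrable_aux hθ μ σ m 0
      have Im1 : Integrable
          (fun t : ℝ => (μ + σ * t) ^ m * (t * rexp (-(2 * θ)⁻¹ * t ^ 2))) := by
        simpa using integrable_aux hθ μ σ m 1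
      have key : ∀ t : ℝ, (μ + σ * t) ^ (m + 1) * rexp (-(2 * θ)⁻¹ * t ^ 2)
          = μ * ((μ + σ * t) ^ m * rexp (-(2 * θ)⁻¹ * t ^ 2))
            + σ * ((μ + σ * t) ^ m * (t * rexp (-(2 * θ)⁻¹ * t ^ 2))) := by
        intro t; rw [pow_succ]; ring
      simp only [key]
      rw [integral_add (Im.const_mul μ) (Im1.const_mul σ), integral_const_mul, integral_const_mul,
        integral_mul_gauss_ibp hθ μ σ m, ih m (by omega), ih (m - 1) (by omega),
        K_succ μ (θ * σ ^ 2 / 2) m]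
      ring

lemma exists_onb (D : ℕ) [NeZero D] (v : EuclideanSpace ℝ (Fin D)) (hv : v ≠ 0) :
    ∃ b : OrthonormalBasis (Fin D) ℝ (EuclideanSpace ℝ (Fin D)), b 0 = ‖v‖⁻¹ • v := by
  have hσ : (0 : ℝ) < ‖v‖ := norm_pos_iff.mpr hv
  have card_eq : Module.finrank ℝ (EuclideanSpace ℝ (Fin D)) = Fintype.card (Fin D) := by
    rw [Fintype.card_fin]; exact finrank_euclideanSpace_fin
  have horth : Orthonormal ℝ (({0} : Set (Fin D)).restrict fun _ => ‖v‖⁻¹ • v) := by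
    rw [orthonormal_iff_ite]
    rintro ⟨i, hi⟩ ⟨j, hj⟩
    simp only [Set.mem_singleton_iff] at hi hj
    subst hi; subst hj
    rw [if_pos rfl]
    show inner ℝ (‖v‖⁻¹ • v) (‖v‖⁻¹ • v) = 1
    rw [real_inner_smul_left, real_inner_smul_right, real_inner_self_eq_norm_sq]
    field_simp
  obtain ⟨b, hb⟩ := horth.exists_orthonormalBasis_extension_of_card_eq card_eq
  exact ⟨b, hb 0 rfl⟩

end ContMomentAux

open ContMomentAux

/-- Derivative representation of the continuum directional moment:
`M^{(n)}_v(u) = exp(-‖u‖²/(2θ)) θ^n (d^n/dt^n)|_{t=0} exp(‖u + t v‖²/(2θ))`. -/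
theorem continuum_moment_deriv_representation
    (D : ℕ) (hD : 1 ≤ D) (θ : ℝ) (hθ : 0 < θ)
    (u v : EuclideanSpace ℝ (Fin D)) (n : ℕ) :
    contMoment D θ u v n =
      Real.exp (-‖u‖ ^ 2 / (2 * θ)) * θ ^ n *
        iteratedDeriv n (fun t : ℝ => Real.exp (‖u + t • v‖ ^ 2 / (2 * θ))) 0 := by
  classical
  haveI : NeZero D := ⟨by omega⟩
  have hθ' : θ ≠ 0 := ne_of_gt hθ
  have h2πθ : (0 : ℝ) < 2 * π * θ := by positivity
  set μ : ℝ := (inner ℝ u v : ℝ) with hμdef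
  set σ : ℝ := ‖v‖ with hσdef
  set Z : ℝ := (2 * π * θ) ^ (-(D : ℝ) / 2) with hZdef
  set S : ℝ := Real.sqrt (2 * π * θ) with hSdef
  set g : ℝ → ℝ := fun s : ℝ => rexp (μ * s + (θ * σ ^ 2 / 2) * s ^ 2) with hgdef
  -- Right-hand side equals `iteratedDeriv n g 0`
  have hRHS : Real.exp (-‖u‖ ^ 2 / (2 * θ)) * θ ^ n *
      iteratedDeriv n (fun t : ℝ => Real.exp (‖u + t • v‖ ^ 2 / (2 * θ))) 0
        = iteratedDeriv n g 0 := by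
    have hfun : (fun t : ℝ => Real.exp (‖u + t • v‖ ^ 2 / (2 * θ)))
        = fun t => rexp (‖u‖ ^ 2 / (2 * θ)) * rexp ((μ / θ) * t + (σ ^ 2 / (2 * θ)) * t ^ 2) := by
      funext t
      rw [← Real.exp_add]
      congr 1
      rw [norm_add_sq_real, real_inner_smul_right, norm_smul]
      simp only [Real.norm_eq_abs, mul_pow, sq_abs]
      rw [show (inner ℝ u v : ℝ) = μ from rfl]
      field_simp
      ring
    have hcomp : (fun t : ℝ => rexp ((μ / θ) * t + (σ ^ 2 / (2 * θ)) * t ^ 2))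
        = fun t => g (θ⁻¹ * t) := by
      funext t
      rw [hgdef]
      congr 1
      field_simp
    rw [hfun, itd_cmul _ (by rw [hcomp]; exact (g_smooth μ (θ * σ ^ 2 / 2)).comp (by fun_prop)),
      hcomp, iteratedDeriv_comp_const_mul (cd_of_inf (g_smooth μ (θ * σ ^ 2 / 2))) θ⁻¹]
    simp only [mul_zero]
    have h1 : -‖u‖ ^ 2 / (2 * θ) + ‖u‖ ^ 2 / (2 * θ) = 0 := by ring
    have hee : rexp (-‖u‖ ^ 2 / (2 * θ)) * rexp (‖u‖ ^ 2 / (2 * θ)) = 1 := by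
      rw [← Real.exp_add, h1, Real.exp_zero]
    have hpp : θ ^ n * θ⁻¹ ^ n = 1 := by rw [← mul_pow, mul_inv_cancel₀ hθ', one_pow]
    calc rexp (-‖u‖ ^ 2 / (2 * θ)) * θ ^ n
          * (rexp (‖u‖ ^ 2 / (2 * θ)) * (θ⁻¹ ^ n * iteratedDeriv n g 0))
        = (rexp (-‖u‖ ^ 2 / (2 * θ)) * rexp (‖u‖ ^ 2 / (2 * θ)))
          * ((θ ^ n * θ⁻¹ ^ n) * iteratedDeriv n g 0) := by ring
      _ = iteratedDeriv n g 0 := by rw [hee, hpp]; ring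
  rw [hRHS]
  -- Left-hand side: peel off the normalisation constant
  have step0 : contMoment D θ u v n
      = Z * ∫ c : EuclideanSpace ℝ (Fin D),
          (inner ℝ c v : ℝ) ^ n * rexp (-(2 * θ)⁻¹ * ‖c - u‖ ^ 2) := by
    rw [contMoment, ← integral_const_mul]
    refine integral_congr_ae (ae_of_all _ fun c => ?_)
    show (inner ℝ c v : ℝ) ^ n * (Z * rexp (-‖c - u‖ ^ 2 / (2 * θ)))
      = Z * ((inner ℝ c v : ℝ) ^ n * rexp (-(2 * θ)⁻¹ * ‖c - u‖ ^ 2))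
    rw [show -‖c - u‖ ^ 2 / (2 * θ) = -(2 * θ)⁻¹ * ‖c - u‖ ^ 2 by ring]
    ring
  -- translation invariance
  have step1 : ∫ c : EuclideanSpace ℝ (Fin D),
        (inner ℝ c v : ℝ) ^ n * rexp (-(2 * θ)⁻¹ * ‖c - u‖ ^ 2)
      = ∫ w : EuclideanSpace ℝ (Fin D),
          ((inner ℝ w v : ℝ) + μ) ^ n * rexp (-(2 * θ)⁻¹ * ‖w‖ ^ 2) := by
    rw [← integral_add_right_eq_self
      (fun c : EuclideanSpace ℝ (Fin D) =>
        (inner ℝ c v : ℝ) ^ n * rexp (-(2 * θ)⁻¹ * ‖c - u‖ ^ 2)) u]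
    refine integral_congr_ae (ae_of_all _ fun w => ?_)
    simp only [add_sub_cancel_right, inner_add_left, ← hμdef]
  -- rotation invariance
  have step2 : ∫ w : EuclideanSpace ℝ (Fin D),
        ((inner ℝ w v : ℝ) + μ) ^ n * rexp (-(2 * θ)⁻¹ * ‖w‖ ^ 2)
      = ∫ x : EuclideanSpace ℝ (Fin D),
          (μ + σ * x 0) ^ n * rexp (-(2 * θ)⁻¹ * ‖x‖ ^ 2) := by
    rcases eq_or_ne v 0 with hv | hv
    · refine integral_congr_ae (ae_of_all _ fun w => ?_)
      simp [hv, hμdef, hσdef]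
    · obtain ⟨b, hb0⟩ := exists_onb D v hv
      have hσ0 : (0 : ℝ) < σ := norm_pos_iff.mpr hv
      set e := b.repr.symm with he
      rw [← e.measurePreserving.integral_comp e.toHomeomorph.measurableEmbedding]
      refine integral_congr_ae (ae_of_all _ fun x => ?_)
      have hvb : v = σ • b 0 := by
        rw [hb0, hσdef, smul_smul, mul_inv_cancel₀ (ne_of_gt hσ0), one_smul]
      have hinner : (inner ℝ (e x) v : ℝ) = σ * x 0 := by
        calc (inner ℝ (e x) v : ℝ) = (inner ℝ (e x) (σ • b 0) : ℝ) := by rw [← hvb]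
        _ = σ * (inner ℝ (b 0) (e x) : ℝ) := by
            rw [real_inner_smul_right, real_inner_comm]
        _ = σ * (b.repr (e x) 0) := by rw [b.repr_apply_apply]
        _ = σ * x 0 := by rw [he, b.repr.apply_symm_apply]
      simp only [hinner, e.norm_map, add_comm (σ * x 0) μ]
  -- transfer to the product measure
  have step3 : ∫ x : EuclideanSpace ℝ (Fin D),
        (μ + σ * x 0) ^ n * rexp (-(2 * θ)⁻¹ * ‖x‖ ^ 2)
      = ∫ y : Fin D → ℝ, (μ + σ * y 0) ^ n * rexp (-(2 * θ)⁻¹ * ∑ i, (y i) ^ 2) := by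
    have h := (EuclideanSpace.volume_preserving_symm_measurableEquiv_toLp (Fin D))
    rw [← h.integral_comp (MeasurableEquiv.measurableEmbedding _)]
    refine integral_congr_ae (ae_of_all _ fun y => ?_)
    simp only [MeasurableEquiv.coe_toLp_symm, EuclideanSpace.norm_eq, Real.norm_eq_abs, sq_abs]
    rw [Real.sq_sqrt (Finset.sum_nonneg fun i _ => sq_nonneg _)]
  -- factorise using Fubini
  have step4 : ∫ y : Fin D → ℝ, (μ + σ * y 0) ^ n * rexp (-(2 * θ)⁻¹ * ∑ i, (y i) ^ 2)
      = (∫ t : ℝ, (μ + σ * t) ^ n * rexp (-(2 * θ)⁻¹ * t ^ 2))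
        * (∫ t : ℝ, rexp (-(2 * θ)⁻¹ * t ^ 2)) ^ (D - 1) := by
    set f : Fin D → ℝ → ℝ :=
      fun i t => (if i = 0 then (μ + σ * t) ^ n else 1) * rexp (-(2 * θ)⁻¹ * t ^ 2) with hf
    have hpt : ∀ y : Fin D → ℝ, (μ + σ * y 0) ^ n * rexp (-(2 * θ)⁻¹ * ∑ i, (y i) ^ 2)
        = ∏ i, f i (y i) := by
      intro y
      rw [hf]
      simp only
      rw [Finset.prod_mul_distrib, Finset.prod_ite_eq' Finset.univ (0 : Fin D)
        (fun i => (μ + σ * y i) ^ n), if_pos (Finset.mem_univ _), Finset.mul_sum, ← Real.exp_sum]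
    simp only [hpt]
    rw [MeasureTheory.integral_fintype_prod_volume_eq_prod (ι := Fin D) f]
    have h0 : ∫ t : ℝ, f 0 t = ∫ t : ℝ, (μ + σ * t) ^ n * rexp (-(2 * θ)⁻¹ * t ^ 2) := by
      refine integral_congr_ae (ae_of_all _ fun t => ?_)
      rw [hf]
      simp
    have hrest : ∀ i ∈ Finset.univ.erase (0 : Fin D),
        (∫ t : ℝ, f i t) = ∫ t : ℝ, rexp (-(2 * θ)⁻¹ * t ^ 2) := by
      intro i hi
      refine integral_congr_ae (ae_of_all _ fun t => ?_)
      rw [hf]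
      simp only
      rw [if_neg (Finset.ne_of_mem_erase hi), one_mul]
    rw [← Finset.mul_prod_erase Finset.univ _ (Finset.mem_univ (0 : Fin D)), h0,
      Finset.prod_congr rfl hrest, Finset.prod_const,
      Finset.card_erase_of_mem (Finset.mem_univ _), Finset.card_univ, Fintype.card_fin]
  -- the one-dimensional Gaussian integral
  have stepG : ∫ t : ℝ, rexp (-(2 * θ)⁻¹ * t ^ 2) = S := by
    rw [integral_gaussian, hSdef]
    congr 1
    field_simp
  -- scalar arithmetic
  have hD1 : D - 1 + 1 = D := by omega
  have hSD : S ^ D = (2 * π * θ) ^ ((D : ℝ) / 2) := by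
    rw [hSdef, ← Real.rpow_natCast (Real.sqrt (2 * π * θ)) D, Real.sqrt_eq_rpow,
      ← Real.rpow_mul (le_of_lt h2πθ)]
    congr 1
    ring
  have hZS : Z * (S * S ^ (D - 1)) = 1 := by
    rw [← pow_succ', hD1, hSD, hZdef, ← Real.rpow_add h2πθ,
      show -(D : ℝ) / 2 + (D : ℝ) / 2 = 0 by ring, Real.rpow_zero]
  rw [step0, step1, step2, step3, step4, stepG, moment1D hθ μ σ n, ← hSdef, ← hgdef]
  calc Z * (S * iteratedDeriv n g 0 * S ^ (D - 1))
      = (Z * (S * S ^ (D - 1))) * iteratedDeriv n g 0 := by ring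
    _ = iteratedDeriv n g 0 := by rw [hZS]; ring
end
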